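/- arXiv:2507.20889 — 4 statements merged into one kernel-verified Lean document; each statement's English description precedes it below -/
import Mathlib

section
/- Let f, v₁, v₂ ∈ K[x] with f ≠ 0, and suppose 1 is a greatest common divisor of f, v₁, v₂ (equivalently, no nonconstant polynomial divides all three). Then there exists h ∈ K[x] such that f and v₁ + h·v₂ are coprime, i.e. gcd(f, v₁ + h·v₂) = 1. -/
open Polynomial

/-- Let `f, v₁, v₂ ∈ K[x]` with `f ≠ 0` and suppose `1` is a greatest
common divisor of `f, v₁, v₂` (every common divisor of the three is a unit). Then there
exists `h ∈ K[x]` such that `gcd(f, v₁ + h·v₂) = 1`, i.e. `f` and `v₁ + h·v₂` are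
coprime. -/
theorem exists_coprime_combination {K : Type*} [Field K]
    (f v₁ v₂ : Polynomial K) (hf : f ≠ 0)
    (hgcd : ∀ c : Polynomial K, c ∣ f → c ∣ v₁ → c ∣ v₂ → IsUnit c) :
    ∃ h : Polynomial K, IsCoprime f (v₁ + h * v₂) := by
  classical
  set S : Finset (Polynomial K) :=
    (UniqueFactorizationMonoid.normalizedFactors f).toFinset.filter (fun p => ¬ p ∣ v₁) with hS
  refine ⟨∏ p ∈ S, p, isCoprime_of_prime_dvd (fun ⟨h0, _⟩ => hf h0) ?_⟩
  intro z hz hzf hzsum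
  by_cases hzv₁ : z ∣ v₁
  · -- then z ∣ (∏ p in S, p) * v₂, so z ∣ ∏ or z ∣ v₂
    have hzp : z ∣ (∏ p ∈ S, p) * v₂ := (dvd_add_right hzv₁).mp hzsum
    rcases hz.dvd_mul.mp hzp with h1 | h2
    · obtain ⟨p, hpS, hzp⟩ := hz.exists_mem_finset_dvd h1
      have hp := (Finset.mem_filter.mp hpS).2
      have hprime : Prime p := UniqueFactorizationMonoid.prime_of_normalized_factor p
        (Multiset.mem_toFinset.mp (Finset.mem_filter.mp hpS).1)
      have hassoc : Associated z p :=
        hz.associated_of_dvd hprime hzp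
      exact hp (hassoc.symm.dvd.trans hzv₁)
    · exact hz.not_unit (hgcd z hzf hzv₁ h2)
  · -- z ∤ v₁ : then normalize z ∈ S, so z ∣ ∏, hence z ∣ v₁, contradiction
    obtain ⟨q, hq, hzq⟩ :=
      UniqueFactorizationMonoid.exists_mem_normalizedFactors_of_dvd hf hz.irreducible hzf
    have hqS : q ∈ S := by
      refine Finset.mem_filter.mpr ⟨Multiset.mem_toFinset.mpr hq, fun hqv₁ => ?_⟩
      exact hzv₁ (hzq.dvd.trans hqv₁)
    have hzprod : z ∣ ∏ p ∈ S, p := hzq.dvd.trans (Finset.dvd_prod_of_mem _ hqS)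
    have : z ∣ (∏ p ∈ S, p) * v₂ := hzprod.mul_right _
    exact hzv₁ ((dvd_add_left this).mp hzsum)
end

section
/- Let l ≥ 2 and let W be the l×l matrix over R = K[x,y] whose (i,i) entry is f_i for 1 ≤ i ≤ l−1, whose (i,l) entry is v_i·(py+q) for 1 ≤ i ≤ l, and all of whose other entries are 0, where f₁, f₂, …, f_{l−1} ∈ K[x] are nonzero with f₁ ∣ f₂ ∣ ⋯ ∣ f_{l−1}, and p, q, v₁, …, v_l ∈ K[x]. If I_1(W) = R, then the ideal of R generated by f₁ and py+q equals R, and 1 is a greatest common divisor of f₁, v₁, …, v_l in K[x]. -/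
open Polynomial Matrix

/-- Let `l ≥ 2` and let `W ∈ K[x,y]^{l×l}` have `(i,i)` entry `fᵢ`
(for `i` among the first `l-1` indices), `(i, l)` entry `vᵢ·(p·y+q)`, and all other
entries `0`, where the `fᵢ ∈ K[x]` are nonzero with `f₁ ∣ f₂ ∣ ⋯ ∣ f_{l-1}` and
`p, q, v₁, …, v_l ∈ K[x]`. If the entries of `W` generate the unit ideal
(`I₁(W) = K[x,y]`), then `⟨f₁, p·y+q⟩ = K[x,y]` and `1` is a greatest common divisor
of `f₁, v₁, …, v_l` in `K[x]`. -/
theorem entries_unit_ideal_consequences {K : Type*} [Field K] {l : ℕ} (hl : 2 ≤ l)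
    (f v : Fin l → Polynomial K) (p q : Polynomial K)
    (hf : ∀ i : Fin l, (i : ℕ) < l - 1 → f i ≠ 0)
    (hchain : ∀ i j : Fin l, (i : ℕ) ≤ (j : ℕ) → (j : ℕ) < l - 1 → f i ∣ f j)
    (W : Matrix (Fin l) (Fin l) (Polynomial (Polynomial K)))
    (hW : W = Matrix.of fun i j : Fin l =>
      if (j : ℕ) = l - 1 then C (v i) * (C p * X + C q)
      else if i = j then C (f i) else 0)
    (hI : Ideal.span {a : Polynomial (Polynomial K) | ∃ i j : Fin l, W i j = a} = ⊤) :
    Ideal.span {(C (f ⟨0, by omega⟩) : Polynomial (Polynomial K)), C p * X + C q} = ⊤ ∧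
    ∀ c : Polynomial K, c ∣ f ⟨0, by omega⟩ → (∀ i : Fin l, c ∣ v i) → IsUnit c := by
  have key : ∀ (J : Ideal (Polynomial (Polynomial K))),
      (C (f ⟨0, by omega⟩) : Polynomial (Polynomial K)) ∈ J →
      (∀ i : Fin l, (C (v i) * (C p * X + C q) : Polynomial (Polynomial K)) ∈ J) →
      (1 : Polynomial (Polynomial K)) ∈ J := by
    intro J hf0 hpq
    have hle : Ideal.span {a : Polynomial (Polynomial K) | ∃ i j : Fin l, W i j = a} ≤ J := by
      rw [Ideal.span_le]
      rintro a ⟨i, j, rfl⟩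
      rw [hW]
      simp only [Matrix.of_apply]
      by_cases hj : (j : ℕ) = l - 1
      · rw [if_pos hj]
        exact hpq i
      · rw [if_neg hj]
        by_cases hij : i = j
        · subst hij
          rw [if_pos rfl]
          have hjl : (i : ℕ) < l - 1 := by have := i.isLt; omega
          obtain ⟨k, hk⟩ := hchain ⟨0, by omega⟩ i (by simp) hjl
          rw [hk, C_mul]
          exact J.mul_mem_right _ hf0
        · rw [if_neg hij]; exact J.zero_mem
    exact hle (hI ▸ Submodule.mem_top)
  constructor
  · rw [Ideal.eq_top_iff_one]
    refine key _ (Ideal.subset_span (by simp)) fun i => ?_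
    exact Ideal.mul_mem_left _ _ (Ideal.subset_span (by simp))
  · intro c hc hv
    have h1 : (1 : Polynomial (Polynomial K)) ∈ Ideal.span {(C c : Polynomial (Polynomial K))} := by
      refine key _ ?_ fun i => ?_
      · rw [Ideal.mem_span_singleton]
        exact _root_.map_dvd C hc
      · rw [Ideal.mem_span_singleton]
        exact Dvd.dvd.mul_right (_root_.map_dvd C (hv i)) _
    rw [Ideal.mem_span_singleton] at h1
    have : IsUnit (C c : Polynomial (Polynomial K)) := isUnit_of_dvd_one h1
    rwa [Polynomial.isUnit_C] at this
end

section
/- Let s ≥ 2 be an integer and let M be the 2×2 matrix over ℚ[x,y] given by M = [[−1+x−y+y², y], [0, 1+x−y^{s−2}]]. Then there do not exist unimodular matrices U, V ∈ GL₂(ℚ[x,y]) such that U M V = diag(1, (−1+x−y+y²)(1+x−y^{s−2})); that is, M is not equivalent over ℚ[x,y] to its Smith normal form diag(1, det(M)). -/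
open Polynomial Matrix

/-- The variable `x` of `ℚ[x,y] = (ℚ[x])[y]` (the inner variable). -/
noncomputable def xQ : Polynomial (Polynomial ℚ) := Polynomial.C Polynomial.X

/-- The variable `y` of `ℚ[x,y] = (ℚ[x])[y]` (the outer variable). -/
noncomputable def yQ : Polynomial (Polynomial ℚ) := Polynomial.X

noncomputable def piA : Polynomial (Polynomial ℚ) →+* Polynomial ℚ :=
  eval₂RingHom (eval₂RingHom C (1 + X - X^2)) X
noncomputable def piB (n : ℕ) : Polynomial (Polynomial ℚ) →+* Polynomial ℚ :=
  eval₂RingHom (eval₂RingHom C (X^n - 1)) X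

lemma piA_x : piA xQ = 1 + X - X^2 := by simp [piA, xQ]
lemma piA_y : piA yQ = X := by simp [piA, yQ]
lemma piB_x (n : ℕ) : piB n xQ = X^n - 1 := by simp [piB, xQ]
lemma piB_y (n : ℕ) : piB n yQ = X := by simp [piB, yQ]

lemma exists_const_poly (p w : Polynomial ℚ) (h : p * w = 1) : ∃ c : ℚ, c ≠ 0 ∧ p = C c := by
  have hu : IsUnit p := IsUnit.of_mul_eq_one _ h
  rw [Polynomial.isUnit_iff] at hu
  obtain ⟨r, hr, hrp⟩ := hu
  exact ⟨r, hr.ne_zero, hrp.symm⟩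

lemma ringHom_ext2 (f g : Polynomial (Polynomial ℚ) →+* ℂ)
    (hx : f (C X) = g (C X)) (hy : f X = g X) : f = g := by
  apply Polynomial.ringHom_ext (fun p => ?_) hy
  have h : f.comp (C : Polynomial ℚ →+* _) = g.comp C := by
    apply Polynomial.ringHom_ext (fun a => ?_) hx
    have h2 : (f.comp C).comp (C : ℚ →+* Polynomial ℚ) = (g.comp C).comp C :=
      Subsingleton.elim _ _
    exact RingHom.congr_fun h2 a
  exact RingHom.congr_fun h p

lemma exists_complex_root (n : ℕ) : ∃ θ : ℂ, 2 + θ - θ^2 - θ^n = 0 := by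
  set P : Polynomial ℂ := C 2 + X - X^2 - X^n with hP
  have hdeg : 0 < P.degree := by
    rcases Nat.lt_or_ge n 3 with h3 | h3
    · have hc : P.coeff 2 ≠ 0 := by
        interval_cases n <;>
          simp [hP, coeff_C, coeff_X, coeff_X_pow, coeff_one] <;> norm_num
      have := le_degree_of_ne_zero hc
      exact lt_of_lt_of_le (by norm_num) this
    · have hc : P.coeff n ≠ 0 := by
        have h0 : n ≠ 0 := by omega
        have h1 : n ≠ 1 := by omega
        have h2 : n ≠ 2 := by omega
        simp [hP, coeff_C, coeff_X, coeff_X_pow, h0, Ne.symm h1, h2, Ne.symm h2]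
      have := le_degree_of_ne_zero hc
      refine lt_of_lt_of_le ?_ this
      exact_mod_cast Nat.pos_of_ne_zero (by omega)
  obtain ⟨θ, hθ⟩ := Complex.exists_root hdeg
  refine ⟨θ, ?_⟩
  have := hθ
  simp only [IsRoot, hP, eval_add, eval_sub, eval_pow, eval_X, eval_C] at this
  linear_combination this


lemma coprime_int (q : ℚ) : IsCoprime (q.num) (q.den : ℤ) := by
  rw [Int.isCoprime_iff_gcd_eq_one]; exact q.reduced

lemma den_eq_one_of (q : ℚ) (N : ℕ) (h : ((q.den:ℤ)) ∣ q.num ^ N) : q.den = 1 := by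
  have hco : IsCoprime ((q.den:ℤ)) (q.num ^ N) := ((coprime_int q).symm).pow_right
  have hu := hco.isUnit_of_dvd h
  rw [Int.isUnit_iff] at hu
  have := q.pos; omega

lemma num_eq (q : ℚ) (h1 : q.den = 1) : q = (q.num : ℚ) := by
  conv_lhs => rw [← Rat.num_div_den q]
  rw [h1]; simp

lemma no_rat_root (n : ℕ) (q : ℚ) : 2 + q - q^2 - q^n ≠ 0 := by
  intro h
  have hden0 : ((q.den:ℚ)) ≠ 0 := by
    have := q.pos; positivity
  have hab : (q.num:ℚ) = q * ((q.den:ℤ):ℚ) := by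
    push_cast
    nth_rewrite 2 [← Rat.num_div_den q]
    field_simp
  set a := q.num with ha
  set b := ((q.den : ℤ)) with hbdef
  have hbpos : (0:ℤ) < b := by rw [hbdef]; exact_mod_cast q.pos
  rcases Nat.lt_or_ge n 3 with h3 | h3
  · interval_cases n
    · -- n = 0 : 1 + q - q² = 0
      have hd : b ∣ a ^ 2 := ⟨b + a, by
        have h5 : ((a^2 - b*(b+a) : ℤ) : ℚ) = 0 := by
          push_cast; rw [hab]; push_cast; linear_combination (-((q.den:ℚ))^2) * h
        have h6 : (a^2 - b*(b+a) : ℤ) = 0 := by exact_mod_cast h5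
        linarith⟩
      have hden := den_eq_one_of q 2 hd
      rw [num_eq q hden] at h
      have hz : (2:ℤ) + a - a^2 - a^0 = 0 := by exact_mod_cast h
      have hdvd : a ∣ 1 := ⟨a - 1, by linear_combination hz⟩
      have h1 : a.natAbs ∣ 1 := by simpa using Int.natAbs_dvd_natAbs.mpr hdvd
      have hle : a.natAbs ≤ 1 := Nat.le_of_dvd (by norm_num) h1
      have hb1 : -1 ≤ a := by omega
      have hb2 : a ≤ 1 := by omega
      interval_cases a <;> norm_num at hz
    · -- n = 1 : 2 - q² = 0
      have hd : b ∣ a ^ 2 := ⟨2*b, by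
        have h5 : ((a^2 - b*(2*b) : ℤ) : ℚ) = 0 := by
          push_cast; rw [hab]; push_cast; linear_combination (-((q.den:ℚ))^2) * h
        have h6 : (a^2 - b*(2*b) : ℤ) = 0 := by exact_mod_cast h5
        linarith⟩
      have hden := den_eq_one_of q 2 hd
      rw [num_eq q hden] at h
      have hz : (2:ℤ) + a - a^2 - a^1 = 0 := by exact_mod_cast h
      have hdvd : a ∣ 2 := ⟨a, by linear_combination hz⟩
      have h1 : a.natAbs ∣ 2 := by simpa using Int.natAbs_dvd_natAbs.mpr hdvd
      have hle : a.natAbs ≤ 2 := Nat.le_of_dvd (by norm_num) h1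
      have hb1 : -2 ≤ a := by omega
      have hb2 : a ≤ 2 := by omega
      interval_cases a <;> norm_num at hz
    · -- n = 2 : 2 + q - 2q² = 0
      have hd : b ∣ 2 := by
        have hd2 : b ∣ 2 * a ^ 2 := ⟨2*b + a, by
          have h5 : ((2*a^2 - b*(2*b+a) : ℤ) : ℚ) = 0 := by
            push_cast; rw [hab]; push_cast; linear_combination (-((q.den:ℚ))^2) * h
          have h6 : (2*a^2 - b*(2*b+a) : ℤ) = 0 := by exact_mod_cast h5
          linarith⟩
        exact (((coprime_int q).symm).pow_right (n := 2)).dvd_of_dvd_mul_right hd2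
      have hble : b ≤ 2 := Int.le_of_dvd (by norm_num) hd
      have hcase : b = 1 ∨ b = 2 := by omega
      rcases hcase with hb1' | hb2'
      · have hden : q.den = 1 := by omega
        rw [num_eq q hden] at h
        have hz : (2:ℤ) + a - a^2 - a^2 = 0 := by exact_mod_cast h
        have hdvd : a ∣ 2 := ⟨2*a - 1, by linear_combination hz⟩
        have h1 : a.natAbs ∣ 2 := by simpa using Int.natAbs_dvd_natAbs.mpr hdvd
        have hle : a.natAbs ≤ 2 := Nat.le_of_dvd (by norm_num) h1
        have hb1 : -2 ≤ a := by omega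
        have hb2 : a ≤ 2 := by omega
        interval_cases a <;> norm_num at hz
      · have hab2 : (a:ℚ) = q * 2 := by rw [hab, hb2']; norm_num
        have hz : a^2 - a - 4 = 0 := by
          have h5 : ((a^2 - a - 4 : ℤ) : ℚ) = 0 := by
            push_cast; rw [hab2]; linear_combination (-2:ℚ) * h
          exact_mod_cast h5
        have hdvd : a ∣ 4 := ⟨a - 1, by linear_combination -hz⟩
        have h1 : a.natAbs ∣ 4 := by simpa using Int.natAbs_dvd_natAbs.mpr hdvd
        have hle : a.natAbs ≤ 4 := Nat.le_of_dvd (by norm_num) h1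
        have hb1 : -4 ≤ a := by omega
        have hb2 : a ≤ 4 := by omega
        interval_cases a <;> norm_num at hz
  · obtain ⟨m, rfl⟩ : ∃ m, n = m + 3 := ⟨n - 3, by omega⟩
    have hd : b ∣ a ^ (m+3) := ⟨2*b^(m+2) + a*b^(m+1) - a^2*b^m, by
      have h5 : ((a^(m+3) - b*(2*b^(m+2) + a*b^(m+1) - a^2*b^m) : ℤ) : ℚ) = 0 := by
        push_cast; rw [hab]; push_cast; linear_combination (-((q.den:ℚ))^(m+3)) * h
      have h6 : (a^(m+3) - b*(2*b^(m+2) + a*b^(m+1) - a^2*b^m) : ℤ) = 0 := by exact_mod_cast h5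
      linarith⟩
    have hden := den_eq_one_of q (m+3) hd
    rw [num_eq q hden] at h
    have hz : (2:ℤ) + a - a^2 - a^(m+3) = 0 := by exact_mod_cast h
    have hdvd : a ∣ 2 := ⟨a^(m+2) + a - 1, by linear_combination hz⟩
    have h1 : a.natAbs ∣ 2 := by simpa using Int.natAbs_dvd_natAbs.mpr hdvd
    have hle : a.natAbs ≤ 2 := Nat.le_of_dvd (by norm_num) h1
    have hbb1 : -2 ≤ a := by omega
    have hbb2 : a ≤ 2 := by omega
    interval_cases a
    · have hpow : ((-2:ℤ))^(m+3) = -4 := by linarith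
      have h7 := congrArg Int.natAbs hpow
      rw [Int.natAbs_pow] at h7
      norm_num at h7
      have h8 : (2:ℕ)^3 ≤ 2^(m+3) := Nat.pow_le_pow_right (by norm_num) (by omega)
      omega
    · have hpow : ((-1:ℤ))^(m+3) = 0 := by linarith
      have h7 := congrArg Int.natAbs hpow
      rw [Int.natAbs_pow] at h7
      norm_num at h7
    · have h0 : (0:ℤ)^(m+3) = 0 := zero_pow (by omega)
      rw [h0] at hz; norm_num at hz
    · norm_num at hz
    · have hpow : (2:ℤ)^(m+3) = 0 := by linarith
      have := pow_pos (show (0:ℤ) < 2 by norm_num) (m+3)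
      linarith

/-- For every integer `s ≥ 2`, the matrix
`M = [[-1+x-y+y², y], [0, 1+x-y^{s-2}]]` over `ℚ[x,y]` is not equivalent to its Smith
normal form `diag(1, (-1+x-y+y²)(1+x-y^{s-2}))`: there are no unimodular `U, V` with
`U M V` equal to that diagonal matrix. -/
theorem not_equiv_smithNormalForm (s : ℕ) (hs : 2 ≤ s) :
    ¬ ∃ U V : Matrix (Fin 2) (Fin 2) (Polynomial (Polynomial ℚ)),
      IsUnit U.det ∧ IsUnit V.det ∧
      U * !![-1 + xQ - yQ + yQ ^ 2, yQ; 0, 1 + xQ - yQ ^ (s - 2)] * V =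
        !![1, 0; 0, (-1 + xQ - yQ + yQ ^ 2) * (1 + xQ - yQ ^ (s - 2))] := by
  rintro ⟨U, V, hU, hV, hUV⟩
  set n := s - 2 with hn
  have h00 := Matrix.ext_iff.mpr hUV 0 0
  simp [Matrix.mul_apply, Fin.sum_univ_succ] at h00
  -- reduce mod a
  have ha' := congrArg piA h00
  simp only [_root_.map_add, _root_.map_mul, _root_.map_sub, _root_.map_neg, _root_.map_one, _root_.map_pow, piA_x, piA_y] at ha'
  have hA : (piA (U 0 0) * X + piA (U 0 1) * (2 + X - X^2 - X^n)) * piA (V 1 0) = 1 := by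
    linear_combination ha'
  -- reduce mod b
  have hb' := congrArg (piB n) h00
  simp only [_root_.map_add, _root_.map_mul, _root_.map_sub, _root_.map_neg, _root_.map_one, _root_.map_pow, piB_x, piB_y] at hb'
  have hB : piB n (U 0 0) * ((X^n - 2 - X + X^2) * piB n (V 0 0) + X * piB n (V 1 0)) = 1 := by
    linear_combination hb'
  obtain ⟨c₁, hc₁0, hc₁⟩ := exists_const_poly _ _ hA
  obtain ⟨c₂, hc₂0, hc₂⟩ := exists_const_poly _ _ hB
  obtain ⟨θ, hθ⟩ := exists_complex_root n
  -- two evaluation maps to ℂ agree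
  set E1 : Polynomial (Polynomial ℚ) →+* ℂ := ((aeval θ).toRingHom).comp piA with hE1
  set E2 : Polynomial (Polynomial ℚ) →+* ℂ := ((aeval θ).toRingHom).comp (piB n) with hE2
  have hE : E1 = E2 := by
    apply ringHom_ext2
    · show (aeval θ) (piA xQ) = (aeval θ) (piB n xQ)
      rw [piA_x, piB_x]
      simp only [_root_.map_add, _root_.map_sub, _root_.map_one, _root_.map_pow, aeval_X]
      linear_combination hθ
    · show (aeval θ) (piA yQ) = (aeval θ) (piB n yQ)
      rw [piA_y, piB_y]
  -- evaluate the two constants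
  have h1 : E1 (U 0 0) * θ = (c₁ : ℂ) := by
    have := congrArg (aeval θ) hc₁
    simp only [_root_.map_add, _root_.map_mul, _root_.map_sub, _root_.map_pow, _root_.map_ofNat, aeval_X, aeval_C] at this
    rw [eq_ratCast (algebraMap ℚ ℂ) c₁] at this
    have h2θ : (2:ℂ) + θ - θ^2 - θ^n = 0 := hθ
    show (aeval θ) (piA (U 0 0)) * θ = (c₁ : ℂ)
    linear_combination this - (aeval θ) (piA (U 0 1)) * h2θ
  have h2 : E2 (U 0 0) = (c₂ : ℂ) := by
    show (aeval θ) ((piB n) (U 0 0)) = (c₂ : ℂ)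
    rw [hc₂, aeval_C, eq_ratCast]
  rw [hE, h2] at h1
  have hθq : θ = ((c₁ / c₂ : ℚ) : ℂ) := by
    have hc2 : ((c₂:ℂ)) ≠ 0 := by exact_mod_cast hc₂0
    rw [Rat.cast_div, eq_div_iff hc2]
    linear_combination h1
  rw [hθq] at hθ
  have : ((2 + (c₁/c₂) - (c₁/c₂)^2 - (c₁/c₂)^n : ℚ) : ℂ) = 0 := by
    push_cast at hθ ⊢; linear_combination hθ
  exact no_rat_root n _ (by exact_mod_cast this)
end

section
/- Let s ≥ 2 be an integer and let A = [[1+y−y², −y], [0, −1+y^{s−2}]] and A₁ = [[1+y−y², −1], [0, −1+y^{s−2}]] be 2×2 matrices over ℚ[y]. Then A and A₁ are not similar over ℚ[y]: there is no unimodular matrix Q ∈ GL₂(ℚ[y]) with Q⁻¹ A Q = A₁ (equivalently, no Q with det(Q) a unit of ℚ[y] such that A Q = Q A₁). -/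
open Polynomial Matrix

/-- For every integer `s ≥ 2`, the matrices
`A = [[1+y-y², -y], [0, -1+y^{s-2}]]` and `A₁ = [[1+y-y², -1], [0, -1+y^{s-2}]]`
over `ℚ[y]` are not similar over `ℚ[y]`: there is no `Q` with `det Q` a unit of `ℚ[y]`
such that `A Q = Q A₁`. -/
theorem not_similar_over_Qy (s : ℕ) (hs : 2 ≤ s) :
    ¬ ∃ Q : Matrix (Fin 2) (Fin 2) (Polynomial ℚ),
      IsUnit Q.det ∧
      !![1 + X - X ^ 2, -X; 0, -1 + X ^ (s - 2)] * Q =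
        Q * !![1 + X - X ^ 2, -1; 0, -1 + X ^ (s - 2)] := by
  rintro ⟨Q, hdet, hQ⟩
  have h00 := congrFun (congrFun hQ 0) 0
  have h01 := congrFun (congrFun hQ 0) 1
  simp [Matrix.mul_apply, Fin.sum_univ_two] at h00 h01
  have hQ10 : Q 1 0 = 0 := by
    have : (X : ℚ[X]) * Q 1 0 = 0 := by linear_combination -h00
    exact (mul_eq_zero.mp this).resolve_left X_ne_zero
  have hdet2 : IsUnit (Q 0 0 * Q 1 1) := by
    rwa [Matrix.det_fin_two, hQ10, mul_zero, sub_zero] at hdet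
  obtain ⟨u, huu, hu⟩ := Polynomial.isUnit_iff.mp (isUnit_of_mul_isUnit_left hdet2)
  obtain ⟨v, hvv, hv⟩ := Polynomial.isUnit_iff.mp (isUnit_of_mul_isUnit_right hdet2)
  have key : Q 0 1 * ((2 : ℚ[X]) + X - X ^ 2 - X ^ (s - 2)) = C v * X - C u := by
    rw [hu, hv]
    linear_combination h01
  set f : ℚ[X] := 2 + X - X ^ 2 - X ^ (s - 2) with hf
  have hf2 : 2 ≤ f.natDegree := by
    set n := s - 2 with hn
    rcases Nat.lt_or_ge n 3 with h | h
    · apply le_natDegree_of_ne_zero (n := 2)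
      rw [hf, (map_ofNat C 2).symm]
      interval_cases n <;> simp [coeff_C, coeff_X, coeff_X_pow, coeff_one] <;> norm_num
    · refine le_trans (by omega) (le_natDegree_of_ne_zero (n := n) ?_)
      rw [hf, (map_ofNat C 2).symm]
      simp only [coeff_sub, coeff_add, coeff_C, coeff_X, coeff_X_pow]
      rw [if_neg (by omega), if_neg (by omega), if_neg (by omega)]
      norm_num
  have hq : Q 0 1 = 0 := by
    by_contra hq
    have hfne : f ≠ 0 := by
      intro h; rw [h] at hf2; simp at hf2
    have hdeg : (Q 0 1 * f).natDegree = (Q 0 1).natDegree + f.natDegree :=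
      natDegree_mul hq hfne
    have hle : (C v * X - C u).natDegree ≤ 1 := by
      refine le_trans (natDegree_sub_le _ _)
        (max_le (le_trans (natDegree_C_mul_le _ _) natDegree_X_le) (by simp))
    rw [key] at hdeg
    omega
  rw [hq, zero_mul] at key
  have hv0 : v = 0 := by
    have := congrArg (fun p => p.coeff 1) key
    simpa using this.symm
  exact hvv.ne_zero hv0
end
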